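/- arXiv:1512.07797 — 7 statements merged into one kernel-verified Lean document; each statement's English description precedes it below -/
import Mathlib

section
/- Let l : 2^V → ℝ be a set function with l(∅) = 0 and l(A) ≥ 0 for all A ⊆ V. Then the slack-rescaling surrogate S_l is an extension of l (i.e. S_l(1_A) = l(A) for every A ⊆ V) if and only if l is increasing. -/
open Finset

/-- The chain {σ₁,…,σⱼ}: the image under σ of the first j indices. -/
def chainSet {p : ℕ} (σ : Equiv.Perm (Fin p)) (j : ℕ) : Finset (Fin p) :=
  (Finset.univ.filter fun k : Fin p => (k : ℕ) < j).image σ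

/-- G_l(σ, s) = Σ_{j=1}^p s_{σ_j}·(l({σ₁,…,σⱼ}) − l({σ₁,…,σ_{j−1}})). -/
def lovaszSum {p : ℕ} (l : Finset (Fin p) → ℝ) (σ : Equiv.Perm (Fin p))
    (s : Fin p → ℝ) : ℝ :=
  ∑ j : Fin p, s (σ j) * (l (chainSet σ ((j : ℕ) + 1)) - l (chainSet σ (j : ℕ)))

/-- Indicator vector 1_A ∈ {0,1}^p of A ⊆ V. -/
def indic {p : ℕ} (A : Finset (Fin p)) : Fin p → ℝ := fun i => if i ∈ A then 1 else 0

/-- A permutation sorting s in decreasing order: s_{π_1} ≥ … ≥ s_{π_p}. -/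
def SortsDesc {p : ℕ} (π : Equiv.Perm (Fin p)) (s : Fin p → ℝ) : Prop :=
  ∀ j k : Fin p, j ≤ k → s (π k) ≤ s (π j)

/-- A canonical permutation sorting s in decreasing order. -/
noncomputable def sortDesc {p : ℕ} (s : Fin p → ℝ) : Equiv.Perm (Fin p) :=
  Tuple.sort (fun i => -s i)

/-- The Lovász extension ℓ̂(s) = G_l(π, s) for a permutation π sorting s
decreasingly (independent of the choice of such π). -/
noncomputable def lovaszExt {p : ℕ} (l : Finset (Fin p) → ℝ) (s : Fin p → ℝ) : ℝ :=
  lovaszSum l (sortDesc s) s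

/-- Submodularity: l(A) + l(B) ≥ l(A ∪ B) + l(A ∩ B). -/
def Submodular {p : ℕ} (l : Finset (Fin p) → ℝ) : Prop :=
  ∀ A B : Finset (Fin p), l (A ∪ B) + l (A ∩ B) ≤ l A + l B

/-- The slack-rescaling surrogate S_l(s) = max_{I⊆V} l(I)·(1 − 2 Σ_{i∈I}(1 − s_i)). -/
noncomputable def slackSur {p : ℕ} (l : Finset (Fin p) → ℝ) (s : Fin p → ℝ) : ℝ :=
  Finset.univ.sup' Finset.univ_nonempty
    (fun I : Finset (Fin p) => l I * (1 - 2 * ∑ i ∈ I, (1 - s i)))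

/-- The margin-rescaling surrogate M_l(s) = max_{I⊆V} ( l(I) − 2 Σ_{i∈I}(1 − s_i) ). -/
noncomputable def marginSur {p : ℕ} (l : Finset (Fin p) → ℝ) (s : Fin p → ℝ) : ℝ :=
  Finset.univ.sup' Finset.univ_nonempty
    (fun I : Finset (Fin p) => l I - 2 * ∑ i ∈ I, (1 - s i))

/-- The Lovász hinge, general (non-monotonic) case. -/
noncomputable def hingeGen {p : ℕ} (l : Finset (Fin p) → ℝ) (s : Fin p → ℝ) : ℝ :=
  Finset.univ.sup' Finset.univ_nonempty
    (fun σ : Equiv.Perm (Fin p) => max 0 (lovaszSum l σ s))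

/-- The Lovász hinge, increasing case (componentwise thresholding). -/
noncomputable def hingeInc {p : ℕ} (l : Finset (Fin p) → ℝ) (s : Fin p → ℝ) : ℝ :=
  Finset.univ.sup' Finset.univ_nonempty
    (fun σ : Equiv.Perm (Fin p) =>
      ∑ j : Fin p, max (s (σ j)) 0 *
        (l (chainSet σ ((j : ℕ) + 1)) - l (chainSet σ (j : ℕ))))

/-- slack rescaling yields an extension iff the loss is increasing. -/
theorem slack_extension_iff_increasing (p : ℕ) (hp : 1 ≤ p)
    (l : Finset (Fin p) → ℝ) (h0 : l ∅ = 0) (hnn : ∀ A : Finset (Fin p), 0 ≤ l A) :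
    (∀ A : Finset (Fin p), slackSur l (indic A) = l A) ↔
      (∀ A B : Finset (Fin p), A ⊆ B → l A ≤ l B) := by
  have hsum : ∀ I A : Finset (Fin p),
      ∑ i ∈ I, (1 - indic A i) = ((I \ A).card : ℝ) := by
    intro I A
    have : ∀ i, (1 : ℝ) - indic A i = if i ∈ A then 0 else 1 := by
      intro i; unfold indic; split_ifs <;> ring
    simp only [this]
    have : ∀ i, (if i ∈ A then (0:ℝ) else 1) = if i ∉ A then 1 else 0 := by
      intro i; split_ifs with h1 h2 <;> simp_all
    simp only [this]
    rw [Finset.sum_boole, Finset.sdiff_eq_filter]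
  have key : ∀ A : Finset (Fin p),
      slackSur l (indic A) =
        Finset.univ.sup' Finset.univ_nonempty
          (fun I : Finset (Fin p) => l I * (1 - 2 * ((I \ A).card : ℝ))) := by
    intro A
    unfold slackSur
    congr 1
    funext I
    rw [hsum]
  constructor
  · intro hext A B hAB
    have h1 : l A * (1 - 2 * (((A \ B).card : ℝ))) ≤ slackSur l (indic B) := by
      rw [key B]
      exact Finset.le_sup' (fun I : Finset (Fin p) =>
        l I * (1 - 2 * ((I \ B).card : ℝ))) (Finset.mem_univ A)
    rw [hext B, Finset.sdiff_eq_empty_iff_subset.mpr hAB] at h1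
    simpa using h1
  · intro hmono A
    rw [key A]
    apply le_antisymm
    · apply Finset.sup'_le
      intro I _
      by_cases hIA : I ⊆ A
      · rw [Finset.sdiff_eq_empty_iff_subset.mpr hIA]
        simpa using hmono I A hIA
      · have hc : 1 ≤ (I \ A).card := by
          rw [Nat.one_le_iff_ne_zero, Ne, Finset.card_eq_zero,
            Finset.sdiff_eq_empty_iff_subset]
          exact hIA
        have : l I * (1 - 2 * ((I \ A).card : ℝ)) ≤ 0 := by
          apply mul_nonpos_of_nonneg_of_nonpos (hnn I)
          have : (1 : ℝ) ≤ ((I \ A).card : ℝ) := by exact_mod_cast hc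
          linarith
        exact this.trans (hnn A)
    · have := Finset.le_sup' (f := fun I : Finset (Fin p) =>
        l I * (1 - 2 * ((I \ A).card : ℝ))) (Finset.mem_univ A)
      exact le_trans (by simp) this
end

section
/- Let l : 2^V → ℝ be increasing with l(∅) = 0 and l(A) ≥ 0 for all A ⊆ V. Then there exists a scalar γ > 0 such that the margin-rescaling surrogate of the rescaled function γ·l is an extension of γ·l, i.e. for every A ⊆ V, max_{I ⊆ V} ( γ l(I) − 2 Σ_{i∈I} (1 − (1_A)_i) ) = γ l(A). -/
open Finset

/-- for increasing nonnegative l there is γ > 0 such that margin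
rescaling of γ·l is an extension of γ·l. -/
theorem margin_rescaled_extension_exists (p : ℕ) (hp : 1 ≤ p)
    (l : Finset (Fin p) → ℝ) (h0 : l ∅ = 0) (hnn : ∀ A : Finset (Fin p), 0 ≤ l A)
    (hinc : ∀ A B : Finset (Fin p), A ⊆ B → l A ≤ l B) :
    ∃ γ : ℝ, 0 < γ ∧
      ∀ A : Finset (Fin p), marginSur (fun I => γ * l I) (indic A) = γ * l A := by
  have hl : 0 ≤ l Finset.univ := hnn _
  set γ : ℝ := 1 / (1 + l Finset.univ) with hγ
  have hγpos : 0 < γ := by positivity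
  have hbound : ∀ I : Finset (Fin p), γ * l I ≤ 1 := by
    intro I
    have h1 : l I ≤ l Finset.univ := hinc _ _ (Finset.subset_univ I)
    have : γ * l Finset.univ ≤ 1 := by
      rw [hγ, div_mul_eq_mul_div, div_le_one (by positivity)]
      linarith
    nlinarith
  refine ⟨γ, hγpos, fun A => ?_⟩
  have hsum : ∀ I : Finset (Fin p),
      ∑ i ∈ I, (1 - indic A i) = ((I \ A).card : ℝ) := by
    intro I
    have : ∀ i ∈ I, (1 : ℝ) - indic A i = if i ∉ A then 1 else 0 := by
      intro i _
      simp only [indic]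
      by_cases h : i ∈ A <;> simp [h]
    rw [Finset.sum_congr rfl this, Finset.sum_ite, Finset.sum_const, Finset.sum_const]
    simp [Finset.sdiff_eq_filter]
  unfold marginSur
  apply le_antisymm
  · apply Finset.sup'_le
    intro I _
    show γ * l I - 2 * ∑ i ∈ I, (1 - indic A i) ≤ γ * l A
    rw [hsum I]
    by_cases hI : I ⊆ A
    · have : I \ A = ∅ := Finset.sdiff_eq_empty_iff_subset.mpr hI
      rw [this]
      simp only [Finset.card_empty, Nat.cast_zero, mul_zero, sub_zero]
      exact mul_le_mul_of_nonneg_left (hinc _ _ hI) hγpos.le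
    · have h1 : 1 ≤ (I \ A).card := by
        rcases Finset.not_subset.mp hI with ⟨x, hxI, hxA⟩
        exact Finset.card_pos.mpr ⟨x, Finset.mem_sdiff.mpr ⟨hxI, hxA⟩⟩
      have h1' : (1 : ℝ) ≤ ((I \ A).card : ℝ) := by exact_mod_cast h1
      have := hbound I
      have hA : 0 ≤ γ * l A := mul_nonneg hγpos.le (hnn A)
      linarith
  · have := Finset.le_sup' (f := fun I : Finset (Fin p) =>
      γ * l I - 2 * ∑ i ∈ I, (1 - indic A i)) (Finset.mem_univ A)
    calc γ * l A = γ * l A - 2 * ∑ i ∈ A, (1 - indic A i) := by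
          rw [hsum A]; simp
      _ ≤ _ := this
end

section
/- Let l : 2^V → ℝ be submodular with l(∅) = 0, let s ∈ ℝ^p have all coordinates nonnegative, let π be a permutation of {1,…,p} with s_{π_1} ≥ s_{π_2} ≥ … ≥ s_{π_p}, and define μ ∈ ℝ^p by μ_{π_j} = l({π_1,…,π_j}) − l({π_1,…,π_{j−1}}) for j = 1,…,p. Then for every x in the submodular polyhedron P(l) one has ⟨s, x⟩ ≤ ⟨s, μ⟩ = ℓ̂(s); that is, the greedy vector μ maximizes ⟨s, ·⟩ over P(l) with optimal value the Lovász extension ℓ̂(s). -/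
open Finset

lemma chainSet_zero' {p : ℕ} (σ : Equiv.Perm (Fin p)) : chainSet σ 0 = ∅ := by
  simp [chainSet]

lemma chainSet_succ' {p : ℕ} (σ : Equiv.Perm (Fin p)) (j : Fin p) :
    chainSet σ ((j : ℕ) + 1) = insert (σ j) (chainSet σ (j : ℕ)) := by
  unfold chainSet
  rw [← Finset.image_insert]
  congr 1
  ext k
  simp only [Finset.mem_insert, Finset.mem_filter, Finset.mem_univ, true_and,
    Nat.lt_succ_iff_lt_or_eq]
  constructor
  · rintro (h | h)
    · exact Or.inr h
    · exact Or.inl (Fin.ext h)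
  · rintro (h | h)
    · exact Or.inr (by rw [h])
    · exact Or.inl h

lemma not_mem_chainSet' {p : ℕ} (σ : Equiv.Perm (Fin p)) (j : Fin p) :
    σ j ∉ chainSet σ (j : ℕ) := by
  unfold chainSet
  simp only [Finset.mem_image, Finset.mem_filter, Finset.mem_univ, true_and]
  rintro ⟨k, hk, hkj⟩
  have hk' := σ.injective hkj
  subst hk'
  exact lt_irrefl _ hk

lemma abel_sum' (n : ℕ) (t F : ℕ → ℝ) :
    ∑ j ∈ Finset.range n, t j * (F (j + 1) - F j)
      = t n * F n - t 0 * F 0 + ∑ j ∈ Finset.range n, (t j - t (j + 1)) * F (j + 1) := by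
  induction n with
  | zero => simp
  | succ m ih =>
    rw [Finset.sum_range_succ, Finset.sum_range_succ, ih]
    ring

/-- the greedy vector μ maximizes ⟨s,·⟩ over the submodular
polyhedron P(l), with optimal value the Lovász extension G_l(π,s). -/
theorem greedy_maximizes_over_submodular_polyhedron (p : ℕ) (hp : 1 ≤ p)
    (l : Finset (Fin p) → ℝ) (hsub : Submodular l) (h0 : l ∅ = 0)
    (s : Fin p → ℝ) (hs : ∀ i, 0 ≤ s i)
    (π : Equiv.Perm (Fin p)) (hπ : SortsDesc π s)
    (μ : Fin p → ℝ)
    (hμ : ∀ j : Fin p, μ (π j) = l (chainSet π ((j : ℕ) + 1)) - l (chainSet π (j : ℕ))) :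
    (∀ x : Fin p → ℝ,
        (∀ A : Finset (Fin p), ∑ i ∈ A, x i ≤ l A) →
        ∑ i : Fin p, s i * x i ≤ ∑ i : Fin p, s i * μ i) ∧
      ∑ i : Fin p, s i * μ i = lovaszSum l π s := by
  -- the extended sequence of sorted values
  set t : ℕ → ℝ := fun j => if h : j < p then s (π ⟨j, h⟩) else 0 with ht
  have htcoe : ∀ j : Fin p, t (j : ℕ) = s (π j) := by
    intro j; simp [ht, j.isLt]
  have htp : t p = 0 := by simp [ht]
  have htmono : ∀ j, t (j + 1) ≤ t j := by
    intro j
    by_cases h1 : j + 1 < p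
    · have hj : j < p := Nat.lt_of_succ_lt h1
      simp only [ht, dif_pos h1, dif_pos hj]
      exact hπ ⟨j, hj⟩ ⟨j + 1, h1⟩ (by simp [Fin.le_def])
    · by_cases hj : j < p
      · simp only [ht, dif_neg h1, dif_pos hj]
        exact hs _
      · simp [ht, h1, hj]
  set L : ℕ → ℝ := fun j => l (chainSet π j) with hL
  have hL0 : L 0 = 0 := by simp [hL, chainSet_zero', h0]
  -- key reindexing: for any vector v, ⟨s,v⟩ written as an Abel-type sum
  have key : ∀ v : Fin p → ℝ,
      ∑ i : Fin p, s i * v i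
        = ∑ j ∈ Finset.range p,
            t j * ((∑ i ∈ chainSet π (j + 1), v i) - ∑ i ∈ chainSet π j, v i) := by
    intro v
    rw [← Equiv.sum_comp π (fun i => s i * v i)]
    rw [← Fin.sum_univ_eq_sum_range
      (fun j => t j * ((∑ i ∈ chainSet π (j + 1), v i) - ∑ i ∈ chainSet π j, v i)) p]
    refine Finset.sum_congr rfl fun j _ => ?_
    rw [htcoe, chainSet_succ', Finset.sum_insert (not_mem_chainSet' π j)]
    ring
  have keyμ : ∑ i : Fin p, s i * μ i
      = ∑ j ∈ Finset.range p, t j * (L (j + 1) - L j) := by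
    rw [← Equiv.sum_comp π (fun i => s i * μ i)]
    rw [← Fin.sum_univ_eq_sum_range (fun j => t j * (L (j + 1) - L j)) p]
    refine Finset.sum_congr rfl fun j _ => ?_
    rw [htcoe, hμ j]
  constructor
  · intro x hx
    set X : ℕ → ℝ := fun j => ∑ i ∈ chainSet π j, x i with hX
    have hX0 : X 0 = 0 := by simp [hX, chainSet_zero']
    rw [key x, keyμ]
    have e1 : ∑ j ∈ Finset.range p, t j * (X (j + 1) - X j)
        = ∑ j ∈ Finset.range p, (t j - t (j + 1)) * X (j + 1) := by
      rw [abel_sum' p t X, htp, hX0]; ring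
    have e2 : ∑ j ∈ Finset.range p, t j * (L (j + 1) - L j)
        = ∑ j ∈ Finset.range p, (t j - t (j + 1)) * L (j + 1) := by
      rw [abel_sum' p t L, htp, hL0]; ring
    show ∑ j ∈ Finset.range p, t j * (X (j + 1) - X j)
        ≤ ∑ j ∈ Finset.range p, t j * (L (j + 1) - L j)
    rw [e1, e2]
    refine Finset.sum_le_sum fun j _ => ?_
    exact mul_le_mul_of_nonneg_left (hx _) (sub_nonneg.mpr (htmono j))
  · rw [keyμ, lovaszSum,
      ← Fin.sum_univ_eq_sum_range (fun j => t j * (L (j + 1) - L j)) p]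
    refine Finset.sum_congr rfl fun j _ => ?_
    rw [htcoe]
end

section
/- Let l : 2^V → ℝ be submodular with l(∅) = 0, and let f : [0,1]^p → ℝ be a convex function with f(1_A) ≤ l(A) for every A ⊆ V. Then f(s) ≤ ℓ̂(s) for every s ∈ [0,1]^p; that is, the Lovász extension of a submodular function dominates every convex underestimator agreeing with l at the vertices of the unit cube (it is the convex closure of l). -/
open Finset

private lemma telescope_aux (b : ℕ → ℝ) :
    ∀ n, ∑ j ∈ Finset.range n, (b j - b (j + 1)) = b 0 - b n := by
  intro n
  induction n with
  | zero => simp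
  | succ n ih => rw [Finset.sum_range_succ, ih]; ring

private lemma abel_aux (b L : ℕ → ℝ) :
    ∀ n, ∑ j ∈ Finset.range (n + 1), (b j - b (j + 1)) * L j
      = b 0 * L 0 - b (n + 1) * L n + ∑ j ∈ Finset.range n, b (j + 1) * (L (j + 1) - L j) := by
  intro n
  induction n with
  | zero => simp [Finset.sum_range_one]; ring
  | succ n ih =>
    rw [Finset.sum_range_succ, ih, Finset.sum_range_succ]; ring

/-- the Lovász extension of a submodular function dominates every
convex function on [0,1]^p that underestimates l at the vertices of the cube
(it is the convex closure of l). -/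
theorem lovasz_is_convex_closure (p : ℕ) (hp : 1 ≤ p)
    (l : Finset (Fin p) → ℝ) (hsub : Submodular l) (h0 : l ∅ = 0)
    (f : (Fin p → ℝ) → ℝ)
    (hf : ConvexOn ℝ (Set.Icc (0 : Fin p → ℝ) 1) f)
    (hvert : ∀ A : Finset (Fin p), f (indic A) ≤ l A) :
    ∀ s ∈ Set.Icc (0 : Fin p → ℝ) 1, f s ≤ lovaszExt l s := by
  intro s hs
  obtain ⟨hs0, hs1⟩ := hs
  have hs0' : ∀ i, 0 ≤ s i := fun i => hs0 i
  have hs1' : ∀ i, s i ≤ 1 := fun i => hs1 i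
  set π : Equiv.Perm (Fin p) := sortDesc s with hπ
  have hsort : Monotone (fun j : Fin p => -s (π j)) := by
    have h := Tuple.monotone_sort (fun i => -s i)
    simpa [hπ, sortDesc, Function.comp_def] using h
  -- the sorted values padded with 0 at the end
  set a : ℕ → ℝ := fun j => if h : j < p then s (π ⟨j, h⟩) else 0 with ha
  set b : ℕ → ℝ := fun j => if j = 0 then 1 else a (j - 1) with hb
  set L : ℕ → ℝ := fun j => l (chainSet π j) with hL
  set z : ℕ → (Fin p → ℝ) := fun j => indic (chainSet π j) with hz
  have hbsucc : ∀ j, b (j + 1) = a j := by intro j; simp [hb]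
  have hb0 : b 0 = 1 := by simp [hb]
  have hap : a p = 0 := by simp [ha]
  have ha_nonneg : ∀ j, 0 ≤ a j := by
    intro j; simp only [ha]; split
    · exact hs0' _
    · exact le_refl 0
  have ha_le_one : ∀ j, a j ≤ 1 := by
    intro j; simp only [ha]; split
    · exact hs1' _
    · norm_num
  have ha_anti : ∀ j k : ℕ, j ≤ k → a k ≤ a j := by
    intro j k hjk
    by_cases hk : k < p
    · have hj : j < p := lt_of_le_of_lt hjk hk
      have := hsort (show (⟨j, hj⟩ : Fin p) ≤ ⟨k, hk⟩ from hjk)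
      simp only [neg_le_neg_iff] at this
      simpa [ha, hj, hk] using this
    · simp only [ha, dif_neg hk]
      exact ha_nonneg j
  have hw_nonneg : ∀ j, 0 ≤ b j - b (j + 1) := by
    intro j
    rw [hbsucc]
    cases j with
    | zero => rw [hb0]; linarith [ha_le_one 0]
    | succ m =>
      rw [hbsucc]
      have := ha_anti m (m + 1) (Nat.le_succ m)
      linarith
  have hmemchain : ∀ (i : Fin p) (j : ℕ), i ∈ chainSet π j ↔ ((π.symm i : ℕ) < j) := by
    intro i j
    simp only [chainSet, Finset.mem_image, Finset.mem_filter, Finset.mem_univ, true_and]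
    constructor
    · rintro ⟨k, hk, rfl⟩; simpa using hk
    · intro h; exact ⟨π.symm i, h, by simp⟩
  have hchain0 : chainSet π 0 = ∅ := by
    ext i; simp [hmemchain]
  have hL0 : L 0 = 0 := by rw [hL]; simp only [hchain0]; exact h0
  -- the weights sum to 1
  have hw_sum : ∑ j ∈ Finset.range (p + 1), (b j - b (j + 1)) = 1 := by
    rw [telescope_aux, hb0, hbsucc, hap]; ring
  -- the points are in the cube
  have hmem : ∀ j ∈ Finset.range (p + 1), z j ∈ Set.Icc (0 : Fin p → ℝ) 1 := by
    intro j _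
    constructor
    · intro i; simp only [hz, indic]; split <;> norm_num
    · intro i; simp only [hz, indic]; split <;> norm_num
  -- the convex combination gives s
  have hcomb : ∑ j ∈ Finset.range (p + 1), (b j - b (j + 1)) • z j = s := by
    funext i
    rw [Finset.sum_apply]
    have hm : (π.symm i : ℕ) < p := (π.symm i).isLt
    have : ∀ j ∈ Finset.range (p + 1),
        ((b j - b (j + 1)) • z j) i
          = if (π.symm i : ℕ) < j then b j - b (j + 1) else 0 := by
      intro j _
      simp only [Pi.smul_apply, smul_eq_mul, hz, indic, hmemchain i j]
      split <;> ring
    rw [Finset.sum_congr rfl this, Finset.sum_ite, Finset.sum_const_zero, add_zero]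
    have hfilter : (Finset.range (p + 1)).filter (fun j => (π.symm i : ℕ) < j)
        = Finset.Ico ((π.symm i : ℕ) + 1) (p + 1) := by
      ext j; simp only [Finset.mem_filter, Finset.mem_Ico, Finset.mem_range]; omega
    rw [hfilter]
    have h1 : Finset.Ico ((π.symm i : ℕ) + 1) (p + 1)
        = Finset.range (p + 1) \ Finset.range ((π.symm i : ℕ) + 1) := by
      ext j; simp [Finset.mem_Ico]; omega
    rw [h1, Finset.sum_sdiff_eq_sub (by intro j hj; simp at hj ⊢; omega),
      telescope_aux, telescope_aux, hbsucc, hbsucc, hap]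
    have : (⟨(π.symm i : ℕ), hm⟩ : Fin p) = π.symm i := by ext; rfl
    simp only [ha, dif_pos hm, this, Equiv.apply_symm_apply]
    ring
  -- the value along the chain equals the Lovász extension
  have hLov : ∑ j ∈ Finset.range (p + 1), (b j - b (j + 1)) * L j = lovaszExt l s := by
    rw [abel_aux, hL0, hbsucc, hap]
    have : ∀ j ∈ Finset.range p, b (j + 1) * (L (j + 1) - L j)
        = a j * (L (j + 1) - L j) := by
      intro j _; rw [hbsucc]
    rw [Finset.sum_congr rfl this]
    show _ = lovaszSum l π s
    unfold lovaszSum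
    rw [← Fin.sum_univ_eq_sum_range (fun j => a j * (L (j + 1) - L j)) p]
    simp only [ha, hL, mul_zero, zero_mul, sub_zero, zero_add]
    apply Finset.sum_congr rfl
    intro j _
    rw [dif_pos j.isLt]
  calc f s = f (∑ j ∈ Finset.range (p + 1), (b j - b (j + 1)) • z j) := by rw [hcomb]
    _ ≤ ∑ j ∈ Finset.range (p + 1), (b j - b (j + 1)) • f (z j) :=
        hf.map_sum_le (fun j _ => hw_nonneg j) hw_sum hmem
    _ ≤ ∑ j ∈ Finset.range (p + 1), (b j - b (j + 1)) * L j := by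
        apply Finset.sum_le_sum
        intro j _
        rw [smul_eq_mul]
        exact mul_le_mul_of_nonneg_left (hvert _) (hw_nonneg j)
    _ = lovaszExt l s := hLov
end

section
/- The Jaccard loss satisfies the diminishing-returns inequality for marginal false negatives: for every i ∈ P and all subsets B ⊆ A ⊆ V with i ∉ A, one has l_J(A ∪ {i}) − l_J(A) ≤ l_J(B ∪ {i}) − l_J(B). (Indeed, l_J(A ∪ {i}) − l_J(A) = 1/(m + |A \ P|) for such i.) -/
open Finset

/-- The Jaccard loss as a set function of the set A of mispredicted elements,
for a ground-truth positive set P: l_J(A) = |A| / (|P| + |A \ P|). -/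
noncomputable def jaccardLoss {p : ℕ} (P : Finset (Fin p)) (A : Finset (Fin p)) : ℝ :=
  (A.card : ℝ) / ((P.card : ℝ) + ((A \ P).card : ℝ))

lemma jaccard_marginal {p : ℕ} (P : Finset (Fin p)) (hP : P.Nonempty)
    (i : Fin p) (hi : i ∈ P) (A : Finset (Fin p)) (hiA : i ∉ A) :
    jaccardLoss P (insert i A) - jaccardLoss P A =
      1 / ((P.card : ℝ) + ((A \ P).card : ℝ)) := by
  have hd : insert i A \ P = A \ P := Finset.insert_sdiff_of_mem A hi
  have hc : (insert i A).card = A.card + 1 := Finset.card_insert_of_notMem hiA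
  have hpos : (0:ℝ) < (P.card : ℝ) + ((A \ P).card : ℝ) := by
    have : 0 < P.card := Finset.card_pos.mpr hP
    positivity
  unfold jaccardLoss
  rw [hd, hc]
  push_cast
  field_simp
  ring

/-- diminishing returns of the Jaccard loss for marginal false
negatives (i ∈ P), with the marginal cost equal to 1/(m + |A \ P|). -/
theorem jaccard_diminishing_returns_false_negative (p : ℕ) (hp : 1 ≤ p)
    (P : Finset (Fin p)) (hP : P.Nonempty)
    (i : Fin p) (hi : i ∈ P) (A B : Finset (Fin p)) (hBA : B ⊆ A) (hiA : i ∉ A) :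
    jaccardLoss P (insert i A) - jaccardLoss P A ≤
        jaccardLoss P (insert i B) - jaccardLoss P B ∧
      jaccardLoss P (insert i A) - jaccardLoss P A =
        1 / ((P.card : ℝ) + ((A \ P).card : ℝ)) := by
  have hiB : i ∉ B := fun h => hiA (hBA h)
  have hA := jaccard_marginal P hP i hi A hiA
  have hB := jaccard_marginal P hP i hi B hiB
  refine ⟨?_, hA⟩
  rw [hA, hB]
  have hposB : (0:ℝ) < (P.card : ℝ) + ((B \ P).card : ℝ) := by
    have : 0 < P.card := Finset.card_pos.mpr hP
    positivity
  apply one_div_le_one_div_of_le hposB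
  have : (B \ P).card ≤ (A \ P).card :=
    Finset.card_le_card (Finset.sdiff_subset_sdiff hBA le_rfl)
  exact_mod_cast Nat.add_le_add_left this P.card
end

section
/- The Jaccard loss satisfies the diminishing-returns inequality for marginal false positives: for every i ∈ V \ P and all subsets B ⊆ A ⊆ V with i ∉ A, one has l_J(A ∪ {i}) − l_J(A) ≤ l_J(B ∪ {i}) − l_J(B). -/
open Finset

lemma jaccard_key (m c c' f f' : ℝ) (hm : 1 ≤ m) (hc' : 0 ≤ c') (hcc : c' ≤ c)
    (hcm : c ≤ m) (hf' : 0 ≤ f') (hff : f' ≤ f) :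
    (c + f + 1) / (m + f + 1) - (c + f) / (m + f) ≤
      (c' + f' + 1) / (m + f' + 1) - (c' + f') / (m + f') := by
  have h1 : 0 < m + f := by linarith
  have h2 : 0 < m + f + 1 := by linarith
  have h3 : 0 < m + f' := by linarith
  have h4 : 0 < m + f' + 1 := by linarith
  have e1 : (c + f + 1) / (m + f + 1) - (c + f) / (m + f)
      = (m - c) / ((m + f) * (m + f + 1)) := by
    field_simp
    ring
  have e2 : (c' + f' + 1) / (m + f' + 1) - (c' + f') / (m + f')
      = (m - c') / ((m + f') * (m + f' + 1)) := by
    field_simp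
    ring
  rw [e1, e2]
  apply div_le_div₀ (by linarith) (by linarith) (by positivity)
  nlinarith

/-- diminishing returns of the Jaccard loss for marginal false
positives (i ∉ P). -/
theorem jaccard_diminishing_returns_false_positive (p : ℕ) (hp : 1 ≤ p)
    (P : Finset (Fin p)) (hP : P.Nonempty)
    (i : Fin p) (hi : i ∉ P) (A B : Finset (Fin p)) (hBA : B ⊆ A) (hiA : i ∉ A) :
    jaccardLoss P (insert i A) - jaccardLoss P A ≤
      jaccardLoss P (insert i B) - jaccardLoss P B := by
  have hiB : i ∉ B := fun h => hiA (hBA h)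
  have hiAP : i ∉ A \ P := fun h => hiA (mem_sdiff.mp h).1
  have hiBP : i ∉ B \ P := fun h => hiB (mem_sdiff.mp h).1
  have hsdA : (insert i A) \ P = insert i (A \ P) := by
    rw [insert_sdiff_of_notMem _ hi]
  have hsdB : (insert i B) \ P = insert i (B \ P) := by
    rw [insert_sdiff_of_notMem _ hi]
  have hcA : A.card = (A ∩ P).card + (A \ P).card := by
    rw [card_inter_add_card_sdiff]
  have hcB : B.card = (B ∩ P).card + (B \ P).card := by
    rw [card_inter_add_card_sdiff]
  have hcc : (B ∩ P).card ≤ (A ∩ P).card :=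
    card_le_card (inter_subset_inter hBA (subset_refl _))
  have hff : (B \ P).card ≤ (A \ P).card :=
    card_le_card (sdiff_subset_sdiff hBA (subset_refl _))
  have hcm : (A ∩ P).card ≤ P.card := card_le_card (inter_subset_right)
  have hm : 1 ≤ P.card := card_pos.mpr hP
  simp only [jaccardLoss, hsdA, hsdB, card_insert_of_notMem hiA,
    card_insert_of_notMem hiB, card_insert_of_notMem hiAP,
    card_insert_of_notMem hiBP, hcA, hcB]
  push_cast
  have h := jaccard_key (P.card : ℝ) ((A ∩ P).card : ℝ) ((B ∩ P).card : ℝ)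
    ((A \ P).card : ℝ) ((B \ P).card : ℝ)
    (by exact_mod_cast hm) (by positivity) (by exact_mod_cast hcc)
    (by exact_mod_cast hcm) (by positivity) (by exact_mod_cast hff)
  convert h using 3 <;> ring
end

section
/- The Jaccard loss l_J is a submodular set function: for all A, B ⊆ V, l_J(A) + l_J(B) ≥ l_J(A ∪ B) + l_J(A ∩ B). -/
open Finset


lemma jaccard_key_s15 (m x y i u a b j v : ℝ)
    (hm : 0 < m) (hi : 0 ≤ i) (hix : i ≤ x) (hiy : i ≤ y)
    (hu : u + i = x + y)
    (hj : 0 ≤ j) (hba : b ≤ a) (hav : a ≤ v) (hvm : v ≤ m)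
    (hvj : v + j = a + b) :
    (v + u) / (m + u) + (j + i) / (m + i) ≤ (a + x) / (m + x) + (b + y) / (m + y) := by
  have hx : 0 ≤ x := le_trans hi hix
  have hy : 0 ≤ y := le_trans hi hiy
  have hxu : x ≤ u := by linarith
  have hmi : 0 < m + i := by linarith
  have hmx : 0 < m + x := by linarith
  have hmy : 0 < m + y := by linarith
  have hmu : 0 < m + u := by linarith
  -- spread inequality
  have key2 : 1 / (m + x) + 1 / (m + y) ≤ 1 / (m + i) + 1 / (m + u) := by
    rw [div_add_div _ _ hmx.ne' hmy.ne', div_add_div _ _ hmi.ne' hmu.ne',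
      div_le_div_iff₀ (by positivity) (by positivity)]
    have hu' : u = x + y - i := by linarith
    subst hu'
    nlinarith [mul_nonneg (mul_nonneg (by linarith : (0:ℝ) ≤ 2*m+x+y) (sub_nonneg.2 hix)) (sub_nonneg.2 hiy)]
  have e1 : 0 ≤ 1 / (m + x) - 1 / (m + u) := by
    have : 1 / (m + u) ≤ 1 / (m + x) := one_div_le_one_div_of_le hmx (by linarith)
    linarith
  have e2 : 1 / (m + x) - 1 / (m + u) ≤ 1 / (m + i) - 1 / (m + y) := by linarith
  have hma : 0 ≤ m - a := by linarith
  have hmb : 0 ≤ m - b := by linarith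
  have step2 : (m - a) * (1 / (m + x) - 1 / (m + u)) ≤ (m - b) * (1 / (m + i) - 1 / (m + y)) :=
    mul_le_mul (by linarith) e2 e1 hmb
  have step1 : (v - a) * (1 / (m + u)) ≤ (v - a) * (1 / (m + i)) := by
    apply mul_le_mul_of_nonneg_left _ (by linarith)
    exact one_div_le_one_div_of_le hmi (by linarith)
  -- combine in the (m - c)/(m + ·) form
  have main : (m - a) * (1 / (m + x)) + (m - b) * (1 / (m + y)) ≤
      (m - v) * (1 / (m + u)) + (m - j) * (1 / (m + i)) := by
    have hj' : m - j = (m - b) + (v - a) := by linarith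
    have hv' : m - v = (m - a) - (v - a) := by ring
    rw [hj', hv']
    nlinarith [step1, step2]
  -- convert
  have c1 : (v + u) / (m + u) = 1 - (m - v) * (1 / (m + u)) := by
    field_simp
    ring
  have c2 : (j + i) / (m + i) = 1 - (m - j) * (1 / (m + i)) := by
    field_simp
    ring
  have c3 : (a + x) / (m + x) = 1 - (m - a) * (1 / (m + x)) := by
    field_simp
    ring
  have c4 : (b + y) / (m + y) = 1 - (m - b) * (1 / (m + y)) := by
    field_simp
    ring
  rw [c1, c2, c3, c4]
  linarith


lemma jaccard_aux {p : ℕ} (P : Finset (Fin p)) (hP : P.Nonempty)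
    (A B : Finset (Fin p)) (hba : (B ∩ P).card ≤ (A ∩ P).card)
    (key : ∀ m x y i u a b j v : ℝ,
      0 < m → 0 ≤ i → i ≤ x → i ≤ y → u + i = x + y → 0 ≤ j → b ≤ a → a ≤ v → v ≤ m →
      v + j = a + b →
      (v + u) / (m + u) + (j + i) / (m + i) ≤ (a + x) / (m + x) + (b + y) / (m + y)) :
    ((A ∪ B).card : ℝ) / (P.card + ((A ∪ B) \ P).card)
      + ((A ∩ B).card : ℝ) / (P.card + ((A ∩ B) \ P).card)
      ≤ (A.card : ℝ) / (P.card + (A \ P).card) + (B.card : ℝ) / (P.card + (B \ P).card) := by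
  have hU : (A ∪ B) \ P = (A \ P) ∪ (B \ P) := by ext a; simp; try tauto
  have hI : (A ∩ B) \ P = (A \ P) ∩ (B \ P) := by ext a; simp; try tauto
  have hUP : (A ∪ B) ∩ P = (A ∩ P) ∪ (B ∩ P) := by ext a; simp; try tauto
  have hIP : (A ∩ B) ∩ P = (A ∩ P) ∩ (B ∩ P) := by ext a; simp; try tauto
  have dA : (A ∩ P).card + (A \ P).card = A.card := card_inter_add_card_sdiff A P
  have dB : (B ∩ P).card + (B \ P).card = B.card := card_inter_add_card_sdiff B P
  have dU : ((A ∪ B) ∩ P).card + ((A ∪ B) \ P).card = (A ∪ B).card :=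
    card_inter_add_card_sdiff _ P
  have dI : ((A ∩ B) ∩ P).card + ((A ∩ B) \ P).card = (A ∩ B).card :=
    card_inter_add_card_sdiff _ P
  have hsum : ((A ∪ B) \ P).card + ((A ∩ B) \ P).card = (A \ P).card + (B \ P).card := by
    rw [hU, hI]; exact card_union_add_card_inter _ _
  have hsum2 : ((A ∪ B) ∩ P).card + ((A ∩ B) ∩ P).card = (A ∩ P).card + (B ∩ P).card := by
    rw [hUP, hIP]; exact card_union_add_card_inter _ _
  have hix : ((A ∩ B) \ P).card ≤ (A \ P).card := by
    apply card_le_card; rw [hI]; exact inter_subset_left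
  have hiy : ((A ∩ B) \ P).card ≤ (B \ P).card := by
    apply card_le_card; rw [hI]; exact inter_subset_right
  have hav : (A ∩ P).card ≤ ((A ∪ B) ∩ P).card := by
    apply card_le_card; rw [hUP]; exact subset_union_left
  have hvm : ((A ∪ B) ∩ P).card ≤ P.card := card_le_card inter_subset_right
  have hm : 0 < (P.card : ℝ) := by exact_mod_cast hP.card_pos
  have h1 := key P.card (A \ P).card (B \ P).card ((A ∩ B) \ P).card ((A ∪ B) \ P).card
    (A ∩ P).card (B ∩ P).card ((A ∩ B) ∩ P).card ((A ∪ B) ∩ P).card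
    hm (by positivity) (by exact_mod_cast hix) (by exact_mod_cast hiy)
    (by exact_mod_cast hsum) (by positivity) (by exact_mod_cast hba)
    (by exact_mod_cast hav) (by exact_mod_cast hvm) (by exact_mod_cast hsum2)
  have eA : (A.card : ℝ) = (A ∩ P).card + (A \ P).card := by exact_mod_cast dA.symm
  have eB : (B.card : ℝ) = (B ∩ P).card + (B \ P).card := by exact_mod_cast dB.symm
  have eU : ((A ∪ B).card : ℝ) = ((A ∪ B) ∩ P).card + ((A ∪ B) \ P).card := by
    exact_mod_cast dU.symm
  have eI : ((A ∩ B).card : ℝ) = ((A ∩ B) ∩ P).card + ((A ∩ B) \ P).card := by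
    exact_mod_cast dI.symm
  rw [eA, eB, eU, eI]
  exact h1


/-- the Jaccard loss is submodular. -/
theorem jaccard_submodular (p : ℕ) (hp : 1 ≤ p)
    (P : Finset (Fin p)) (hP : P.Nonempty) :
    ∀ A B : Finset (Fin p),
      jaccardLoss P (A ∪ B) + jaccardLoss P (A ∩ B) ≤
        jaccardLoss P A + jaccardLoss P B := by
  intro A B
  unfold jaccardLoss
  rcases le_total ((B ∩ P).card) ((A ∩ P).card) with h | h
  · exact jaccard_aux P hP A B h (fun m x y i u a b j v h1 h2 h3 h4 h5 h6 h7 h8 h9 h10 =>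
      jaccard_key_s15 m x y i u a b j v h1 h2 h3 h4 h5 h6 h7 h8 h9 h10)
  · have := jaccard_aux P hP B A h (fun m x y i u a b j v h1 h2 h3 h4 h5 h6 h7 h8 h9 h10 =>
      jaccard_key_s15 m x y i u a b j v h1 h2 h3 h4 h5 h6 h7 h8 h9 h10)
    rw [union_comm B A, inter_comm B A] at this
    linarith
end
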